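/- Let g be a positive definite symmetric bilinear form on W, let e₁, …, eₙ be a g-orthonormal basis of W, set dᵢ⁻ = eᵢ ⊕ (−g(eᵢ,·)) ∈ W ⊕ W*, and let 𝒢̃ = κ(d₁⁻ · ⋯ · dₙ⁻) ∈ End(Λ*W*). Then for all ρ, τ ∈ Λ*W*, ⟨𝒢̃(ρ), τ⟩ = (−1)^{n(n+1)/2} ⟨ρ, 𝒢̃(τ)⟩. -/

import Mathlib

set_option synthInstance.maxHeartbeats 400000
set_option maxHeartbeats 1000000

open Module

/-- The quadratic form `Q(x ⊕ ξ) = −ξ(x)` on `W ⊕ W*`. -/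
noncomputable def genQ (W : Type*) [AddCommGroup W] [Module ℝ W] :
    QuadraticForm ℝ (W × Module.Dual ℝ W) :=
  LinearMap.BilinMap.toQuadraticMap
    (-((LinearMap.snd ℝ W (Module.Dual ℝ W)).compl₂ (LinearMap.fst ℝ W (Module.Dual ℝ W))))

/-- The `hat` involution on `Λ*W*`, acting on the degree-`p` component as
multiplication by `(−1)^{p(p+1)/2}`. -/
noncomputable def genHat (W : Type*) [AddCommGroup W] [Module ℝ W] :
    ExteriorAlgebra ℝ (Module.Dual ℝ W) →ₗ[ℝ] ExteriorAlgebra ℝ (Module.Dual ℝ W) :=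
  (DirectSum.toModule ℝ ℕ _ fun p =>
      ((-1 : ℝ) ^ (p * (p + 1) / 2)) • (⋀[ℝ]^p (Module.Dual ℝ W)).subtype) ∘ₗ
    (DirectSum.decomposeLinearEquiv fun i : ℕ => ⋀[ℝ]^i (Module.Dual ℝ W)).toLinearMap

/-- The pairing `⟨ρ, τ⟩`: the degree-`n` component of `ρ ∧ hat(τ)`. -/
noncomputable def genPairing (W : Type*) [AddCommGroup W] [Module ℝ W] (n : ℕ)
    (ρ τ : ExteriorAlgebra ℝ (Module.Dual ℝ W)) : ExteriorAlgebra ℝ (Module.Dual ℝ W) :=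
  GradedAlgebra.proj (fun i : ℕ => ⋀[ℝ]^i (Module.Dual ℝ W)) n (ρ * genHat W τ)

set_option maxRecDepth 10000
set_option linter.dupNamespace false

namespace GenAux
open ExteriorAlgebra CliffordAlgebra

lemma tri (q : ℕ) : (q+1)*(q+1+1)/2 = q*(q+1)/2 + (q+1) := by
  have h : (q+1)*(q+1+1) = q*(q+1) + 2*(q+1) := by ring
  rw [h, Nat.add_mul_div_left _ _ (by norm_num : 0 < (2:ℕ))]

lemma tri2 (m : ℕ) : (m+1)*m/2 = m*(m-1)/2 + m := by
  cases m with
  | zero => simp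
  | succ k =>
    have h : (k+1+1)*(k+1) = (k+1)*(k+1-1) + 2*(k+1) := by simp; ring
    rw [h, Nat.add_mul_div_left _ _ (by norm_num : 0 < (2:ℕ))]

lemma npow_eq {a b : ℕ} (h : a % 2 = b % 2) : ((-1:ℝ))^a = (-1)^b := by
  conv_lhs => rw [← Nat.div_add_mod a 2]
  conv_rhs => rw [← Nat.div_add_mod b 2]
  rw [pow_add, pow_add, pow_mul, pow_mul, neg_one_sq]
  simp [h]

variable {M : Type*} [AddCommGroup M] [Module ℝ M]

lemma ι_anticomm (a b : M) :
    ExteriorAlgebra.ι ℝ a * ExteriorAlgebra.ι ℝ b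
      = -(ExteriorAlgebra.ι ℝ b * ExteriorAlgebra.ι ℝ a) := by
  have h := CliffordAlgebra.ι_mul_ι_add_swap (Q := (0 : QuadraticForm ℝ M)) a b
  have h0 : QuadraticMap.polar (⇑(0 : QuadraticForm ℝ M)) a b = 0 := by
    simp [QuadraticMap.polar]
  rw [h0, map_zero] at h
  exact eq_neg_of_add_eq_zero_left h

lemma ι_mem_one (ξ : M) : ExteriorAlgebra.ι ℝ ξ ∈ ⋀[ℝ]^1 M := by
  simpa only [pow_one] using LinearMap.mem_range_self _ ξ

lemma ι_mul_of_mem {p : ℕ} {x : ExteriorAlgebra ℝ M} (hx : x ∈ ⋀[ℝ]^p M) (ξ : M) :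
    ExteriorAlgebra.ι ℝ ξ * x = ((-1:ℝ)^p) • (x * ExteriorAlgebra.ι ℝ ξ) := by
  induction hx using Submodule.pow_induction_on_left' with
  | algebraMap r => simp [Algebra.commutes]
  | add x y i hx hy ihx ihy => simp only [mul_add, add_mul, ihx, ihy, smul_add]
  | mem_mul m hm i x hx ih =>
    obtain ⟨a, rfl⟩ := hm
    rw [← mul_assoc, ι_anticomm ξ a, neg_mul, mul_assoc, ih]
    rw [mul_smul_comm, Nat.succ_eq_add_one, pow_succ, mul_comm ((-1:ℝ)^i) (-1), mul_smul,
      neg_one_smul, mul_assoc]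

lemma contract_mul_of_mem (d : Module.Dual ℝ M) {p : ℕ} {x : ExteriorAlgebra ℝ M}
    (hx : x ∈ ⋀[ℝ]^p M) :
    ∀ y : ExteriorAlgebra ℝ M,
      contractLeft d (x * y) =
        contractLeft d x * y + ((-1:ℝ)^p) • (x * contractLeft d y) := by
  induction hx using Submodule.pow_induction_on_left' with
  | algebraMap r =>
    intro y
    rw [contractLeft_algebraMap_mul, contractLeft_algebraMap, zero_mul, zero_add, pow_zero,
      one_smul]
  | add x y i hx hy ihx ihy =>
    intro z
    simp only [add_mul, map_add, ihx z, ihy z, smul_add]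
    abel
  | mem_mul m hm i x hx ih =>
    obtain ⟨a, rfl⟩ := hm
    intro y
    rw [mul_assoc, contractLeft_ι_mul, contractLeft_ι_mul, ih y, Nat.succ_eq_add_one, pow_succ]
    rw [mul_add, mul_smul_comm, sub_mul, smul_mul_assoc, mul_neg_one, neg_smul,
      ← mul_assoc, ← mul_assoc]
    abel

lemma contract_mem_of_mem (d : Module.Dual ℝ M) {p : ℕ} {x : ExteriorAlgebra ℝ M}
    (hx : x ∈ ⋀[ℝ]^p M) :
    contractLeft d x ∈ ⋀[ℝ]^(p-1) M ∧ (p = 0 → contractLeft d x = 0) := by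
  induction hx using Submodule.pow_induction_on_left' with
  | algebraMap r =>
    refine ⟨?_, fun _ => contractLeft_algebraMap _ _ _⟩
    rw [contractLeft_algebraMap]; exact Submodule.zero_mem _
  | add x y i hx hy ihx ihy =>
    refine ⟨by rw [map_add]; exact Submodule.add_mem _ ihx.1 ihy.1, fun h0 => ?_⟩
    rw [map_add, ihx.2 h0, ihy.2 h0, add_zero]
  | mem_mul m hm i x hx ih =>
    obtain ⟨a, rfl⟩ := hm
    refine ⟨?_, fun h0 => by omega⟩
    rw [contractLeft_ι_mul, Nat.succ_sub_one]
    refine Submodule.sub_mem _ (Submodule.smul_mem _ _ hx) ?_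
    cases i with
    | zero =>
      rw [ih.2 rfl, mul_zero]; exact Submodule.zero_mem _
    | succ k =>
      have := SetLike.mul_mem_graded (ι_mem_one (M := M) a) ih.1
      simpa [Nat.succ_sub_one, add_comm 1 k] using this

lemma top_zero [FiniteDimensional ℝ M] {m : ℕ} (h : finrank ℝ M < m)
    {x : ExteriorAlgebra ℝ M} (hx : x ∈ ⋀[ℝ]^m M) : x = 0 := by
  rw [← ExteriorAlgebra.ιMulti_span_fixedDegree] at hx
  have hz : Set.range (ιMulti ℝ m (M := M)) ⊆ {(0 : ExteriorAlgebra ℝ M)} := by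
    rintro _ ⟨v, rfl⟩
    refine Set.mem_singleton_iff.mpr (AlternatingMap.map_linearDependent _ v fun hli => ?_)
    have := hli.fintype_card_le_finrank
    simp only [Fintype.card_fin] at this
    omega
  have hle : Submodule.span ℝ (Set.range (ιMulti ℝ m (M := M))) ≤ ⊥ := by
    rw [← Submodule.span_zero_singleton (R := ℝ) (M := ExteriorAlgebra ℝ M)]
    exact Submodule.span_mono hz
  simpa using hle hx


open ExteriorAlgebra CliffordAlgebra

section Wsec

variable {W : Type*} [AddCommGroup W] [Module ℝ W]

lemma hat_of_mem {q : ℕ} {τ : ExteriorAlgebra ℝ (Module.Dual ℝ W)}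
    (hτ : τ ∈ ⋀[ℝ]^q (Module.Dual ℝ W)) :
    genHat W τ = ((-1:ℝ)^(q*(q+1)/2)) • τ := by
  unfold genHat
  simp only [LinearMap.coe_comp, Function.comp_apply, LinearEquiv.coe_coe,
    DirectSum.decomposeLinearEquiv_apply]
  rw [DirectSum.decompose_of_mem (fun i : ℕ => ⋀[ℝ]^i (Module.Dual ℝ W)) hτ, ← DirectSum.lof_eq_of ℝ, DirectSum.toModule_lof]
  simp

lemma pairing_of_mem (n : ℕ) {p q : ℕ} {ρ τ : ExteriorAlgebra ℝ (Module.Dual ℝ W)}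
    (hρ : ρ ∈ ⋀[ℝ]^p (Module.Dual ℝ W)) (hτ : τ ∈ ⋀[ℝ]^q (Module.Dual ℝ W)) :
    genPairing W n ρ τ
      = if p + q = n then ((-1:ℝ)^(q*(q+1)/2)) • (ρ * τ) else 0 := by
  unfold genPairing
  rw [hat_of_mem hτ, mul_smul_comm, map_smul]
  have hmul : ρ * τ ∈ ⋀[ℝ]^(p+q) (Module.Dual ℝ W) := SetLike.mul_mem_graded hρ hτ
  rw [GradedAlgebra.proj_apply]
  by_cases h : p + q = n
  · rw [if_pos h]
    rw [DirectSum.decompose_of_mem_same (fun i : ℕ => ⋀[ℝ]^i (Module.Dual ℝ W)) (h ▸ hmul)]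
  · rw [if_neg h]
    rw [DirectSum.decompose_of_mem_ne (fun i : ℕ => ⋀[ℝ]^i (Module.Dual ℝ W)) hmul h, smul_zero]

lemma pairing_zero_left (n : ℕ) (τ : ExteriorAlgebra ℝ (Module.Dual ℝ W)) :
    genPairing W n 0 τ = 0 := by
  unfold genPairing; rw [zero_mul, map_zero]

lemma pairing_zero_right (n : ℕ) (ρ : ExteriorAlgebra ℝ (Module.Dual ℝ W)) :
    genPairing W n ρ 0 = 0 := by
  unfold genPairing; rw [map_zero, mul_zero, map_zero]

lemma pairing_add_left (n : ℕ) (ρ₁ ρ₂ τ : ExteriorAlgebra ℝ (Module.Dual ℝ W)) :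
    genPairing W n (ρ₁ + ρ₂) τ = genPairing W n ρ₁ τ + genPairing W n ρ₂ τ := by
  unfold genPairing; rw [add_mul, map_add]

lemma pairing_add_right (n : ℕ) (ρ τ₁ τ₂ : ExteriorAlgebra ℝ (Module.Dual ℝ W)) :
    genPairing W n ρ (τ₁ + τ₂) = genPairing W n ρ τ₁ + genPairing W n ρ τ₂ := by
  unfold genPairing; rw [map_add, mul_add, map_add]

lemma pairing_sub_left (n : ℕ) (ρ₁ ρ₂ τ : ExteriorAlgebra ℝ (Module.Dual ℝ W)) :
    genPairing W n (ρ₁ - ρ₂) τ = genPairing W n ρ₁ τ - genPairing W n ρ₂ τ := by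
  unfold genPairing; rw [sub_mul, map_sub]

lemma pairing_sub_right (n : ℕ) (ρ τ₁ τ₂ : ExteriorAlgebra ℝ (Module.Dual ℝ W)) :
    genPairing W n ρ (τ₁ - τ₂) = genPairing W n ρ τ₁ - genPairing W n ρ τ₂ := by
  unfold genPairing; rw [map_sub, mul_sub, map_sub]

lemma pairing_smul_right (n : ℕ) (r : ℝ) (ρ τ : ExteriorAlgebra ℝ (Module.Dual ℝ W)) :
    genPairing W n ρ (r • τ) = r • genPairing W n ρ τ := by
  unfold genPairing; rw [map_smul, mul_smul_comm, map_smul]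

lemma pairing_smul_left (n : ℕ) (r : ℝ) (ρ τ : ExteriorAlgebra ℝ (Module.Dual ℝ W)) :
    genPairing W n (r • ρ) τ = r • genPairing W n ρ τ := by
  unfold genPairing; rw [smul_mul_assoc, map_smul]

end Wsec


section Wsec2

variable {W : Type*} [AddCommGroup W] [Module ℝ W]

lemma L1 (n : ℕ) (ξ : Module.Dual ℝ W) (ρ τ : ExteriorAlgebra ℝ (Module.Dual ℝ W)) :
    genPairing W n (ExteriorAlgebra.ι ℝ ξ * ρ) τ
      = ((-1:ℝ)^n) • genPairing W n ρ (ExteriorAlgebra.ι ℝ ξ * τ) := by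
  induction ρ using DirectSum.Decomposition.inductionOn
      (fun i : ℕ => ⋀[ℝ]^i (Module.Dual ℝ W)) with
  | zero => rw [mul_zero, pairing_zero_left, pairing_zero_left, smul_zero]
  | add a b ha hb =>
    rw [mul_add, pairing_add_left, ha, hb, pairing_add_left, smul_add]
  | homogeneous m =>
    rename_i p
    induction τ using DirectSum.Decomposition.inductionOn
        (fun i : ℕ => ⋀[ℝ]^i (Module.Dual ℝ W)) with
    | zero => rw [pairing_zero_right, mul_zero, pairing_zero_right, smul_zero]
    | add a b ha hb =>
      rw [pairing_add_right, ha, hb, mul_add, pairing_add_right, smul_add]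
    | homogeneous t =>
      rename_i q
      have h1 : ExteriorAlgebra.ι ℝ ξ * (↑m : ExteriorAlgebra ℝ (Module.Dual ℝ W))
          ∈ ⋀[ℝ]^(1+p) (Module.Dual ℝ W) := SetLike.mul_mem_graded (ι_mem_one ξ) m.2
      have h2 : ExteriorAlgebra.ι ℝ ξ * (↑t : ExteriorAlgebra ℝ (Module.Dual ℝ W))
          ∈ ⋀[ℝ]^(1+q) (Module.Dual ℝ W) := SetLike.mul_mem_graded (ι_mem_one ξ) t.2
      rw [pairing_of_mem n h1 t.2, pairing_of_mem n m.2 h2]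
      by_cases h : 1 + p + q = n
      · rw [if_pos (by omega : 1 + p + q = n), if_pos (by omega : p + (1+q) = n)]
        rw [ι_mul_of_mem m.2 ξ, smul_mul_assoc, smul_smul, ← mul_assoc, smul_smul]
        congr 1
        rw [← pow_add, ← pow_add]
        apply npow_eq
        have e1 : (1+q)*(1+q+1) = q*(q+1) + 2*(q+1) := by ring
        have e2 : (1+q)*(1+q+1)/2 = q*(q+1)/2 + (q+1) := by
          rw [e1, Nat.add_mul_div_left _ _ (by norm_num : 0 < (2:ℕ))]
        rw [e2]
        generalize q*(q+1)/2 = u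
        omega
      · rw [if_neg (by omega), if_neg (by omega), smul_zero]

lemma L2 [FiniteDimensional ℝ W] (n : ℕ) (hn : Module.finrank ℝ W = n) (x : W)
    (ρ τ : ExteriorAlgebra ℝ (Module.Dual ℝ W)) :
    genPairing W n (contractLeft (Module.Dual.eval ℝ W x) ρ) τ
      = ((-1:ℝ)^n) • genPairing W n ρ (contractLeft (Module.Dual.eval ℝ W x) τ) := by
  have hM : finrank ℝ (Module.Dual ℝ W) = n := by
    rw [Subspace.dual_finrank_eq]; exact hn
  set d := Module.Dual.eval ℝ W x with hd_def
  induction ρ using DirectSum.Decomposition.inductionOn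
      (fun i : ℕ => ⋀[ℝ]^i (Module.Dual ℝ W)) with
  | zero => rw [map_zero, pairing_zero_left, pairing_zero_left, smul_zero]
  | add a b ha hb =>
    rw [map_add, pairing_add_left, ha, hb, pairing_add_left, smul_add]
  | homogeneous m =>
    rename_i p
    induction τ using DirectSum.Decomposition.inductionOn
        (fun i : ℕ => ⋀[ℝ]^i (Module.Dual ℝ W)) with
    | zero => rw [pairing_zero_right, map_zero, pairing_zero_right, smul_zero]
    | add a b ha hb =>
      rw [pairing_add_right, ha, hb, map_add, pairing_add_right, smul_add]
    | homogeneous t =>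
      rename_i q
      by_cases hp : n < p
      · have hz : (↑m : ExteriorAlgebra ℝ (Module.Dual ℝ W)) = 0 :=
          top_zero (by omega) m.2
        rw [hz, map_zero, pairing_zero_left, pairing_zero_left, smul_zero]
      · by_cases hq : n < q
        · have hz : (↑t : ExteriorAlgebra ℝ (Module.Dual ℝ W)) = 0 :=
            top_zero (by omega) t.2
          rw [hz, map_zero, pairing_zero_right, pairing_zero_right, smul_zero]
        · obtain ⟨hmρ, hρ0⟩ := contract_mem_of_mem d m.2
          obtain ⟨hmτ, hτ0⟩ := contract_mem_of_mem d t.2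
          rw [pairing_of_mem n hmρ t.2, pairing_of_mem n m.2 hmτ]
          by_cases h : p + q = n + 1
          · have hp1 : 1 ≤ p := by omega
            have hq1 : 1 ≤ q := by omega
            rw [if_pos (by omega : p - 1 + q = n), if_pos (by omega : p + (q-1) = n)]
            have hz : (↑m : ExteriorAlgebra ℝ (Module.Dual ℝ W)) * ↑t = 0 :=
              top_zero (by omega) (SetLike.mul_mem_graded m.2 t.2)
            have hd := contract_mul_of_mem d m.2 (t : ExteriorAlgebra ℝ (Module.Dual ℝ W))
            rw [hz, map_zero] at hd
            have hkey := eq_neg_of_add_eq_zero_left hd.symm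
            rw [hkey, smul_neg, smul_smul, smul_smul, ← neg_smul]
            congr 1
            obtain ⟨q', rfl⟩ : ∃ q', q = q'+1 := ⟨q-1, by omega⟩
            simp only [Nat.add_sub_cancel]
            have e2 : (q'+1)*(q'+1+1)/2 = q'*(q'+1)/2 + (q'+1) := tri q'
            rw [show -((-1:ℝ)^((q'+1)*(q'+1+1)/2) * (-1)^p)
                = (-1:ℝ)^((q'+1)*(q'+1+1)/2 + p + 1) from by rw [pow_add, pow_add]; ring,
              ← pow_add]
            apply npow_eq
            rw [e2]
            generalize q'*(q'+1)/2 = u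
            omega
          · have hL : (if p - 1 + q = n then
                ((-1:ℝ)^(q*(q+1)/2)) • (contractLeft d (↑m : ExteriorAlgebra ℝ (Module.Dual ℝ W)) * ↑t) else 0) = 0 := by
              rcases Nat.eq_zero_or_pos p with hp0 | hp0
              · rw [hρ0 hp0, zero_mul, smul_zero]; simp
              · rw [if_neg (by omega)]
            have hR : (if p + (q - 1) = n then
                ((-1:ℝ)^((q-1)*(q-1+1)/2)) • ((↑m : ExteriorAlgebra ℝ (Module.Dual ℝ W)) * contractLeft d ↑t) else 0) = 0 := by
              rcases Nat.eq_zero_or_pos q with hq0 | hq0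
              · rw [hτ0 hq0, mul_zero, smul_zero]; simp
              · rw [if_neg (by omega)]
            rw [hL, hR, smul_zero]

end Wsec2


section Wsec3

variable {W : Type*} [AddCommGroup W] [Module ℝ W]

lemma step [FiniteDimensional ℝ W] (n : ℕ) (hn : Module.finrank ℝ W = n)
    (w : W × Module.Dual ℝ W) (ρ τ : ExteriorAlgebra ℝ (Module.Dual ℝ W)) :
    genPairing W n
        (ExteriorAlgebra.ι ℝ w.2 * ρ - contractLeft (Module.Dual.eval ℝ W w.1) ρ) τ
      = ((-1:ℝ)^n) • genPairing W n ρ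
        (ExteriorAlgebra.ι ℝ w.2 * τ - contractLeft (Module.Dual.eval ℝ W w.1) τ) := by
  rw [pairing_sub_left, pairing_sub_right, L1 n w.2 ρ τ, L2 n hn w.1 ρ τ, ← smul_sub]

lemma list_adj [FiniteDimensional ℝ W] (n : ℕ) (hn : Module.finrank ℝ W = n)
    (κ : CliffordAlgebra (genQ W) →ₐ[ℝ] Module.End ℝ (ExteriorAlgebra ℝ (Module.Dual ℝ W)))
    (hκ : ∀ (w : W × Module.Dual ℝ W) (ρ : ExteriorAlgebra ℝ (Module.Dual ℝ W)),
      κ (CliffordAlgebra.ι (genQ W) w) ρ =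
        ExteriorAlgebra.ι ℝ w.2 * ρ - contractLeft (Module.Dual.eval ℝ W w.1) ρ)
    (l : List (W × Module.Dual ℝ W)) :
    ∀ (ρ τ : ExteriorAlgebra ℝ (Module.Dual ℝ W)),
      genPairing W n (κ (l.map (CliffordAlgebra.ι (genQ W))).prod ρ) τ
        = ((-1:ℝ)^(n * l.length)) •
            genPairing W n ρ (κ (l.reverse.map (CliffordAlgebra.ι (genQ W))).prod τ) := by
  induction l with
  | nil => intro ρ τ; simp
  | cons w ls ih =>
    intro ρ τ
    rw [List.map_cons, List.prod_cons, map_mul, Module.End.mul_apply, hκ w, step n hn,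
      ← hκ w τ, ih ρ (κ (CliffordAlgebra.ι (genQ W) w) τ)]
    have hre : ((w :: ls).reverse.map (CliffordAlgebra.ι (genQ W))).prod
        = (ls.reverse.map (CliffordAlgebra.ι (genQ W))).prod * CliffordAlgebra.ι (genQ W) w := by
      rw [List.reverse_cons, List.map_append, List.prod_append]
      simp
    rw [hre, map_mul, Module.End.mul_apply, smul_smul, ← pow_add, List.length_cons]
    congr 2
    rw [Nat.mul_succ]
    omega

end Wsec3

section Gen

variable {A : Type*} [Ring A] [Algebra ℝ A]

lemma prod_mul_anticomm :
    ∀ (l : List A) (b : A), (∀ c ∈ l, c * b = -(b * c)) →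
      l.prod * b = ((-1:ℝ)^l.length) • (b * l.prod)
  | [], b, _ => by simp
  | c :: ls, b, h => by
    have hc : c * b = -(b * c) := h c List.mem_cons_self
    rw [List.prod_cons, mul_assoc,
      prod_mul_anticomm ls b (fun x hx => h x (List.mem_cons_of_mem _ hx)),
      mul_smul_comm, ← mul_assoc, hc, neg_mul, mul_assoc, smul_neg, List.length_cons,
      pow_succ, mul_neg_one, neg_smul]

lemma reverse_ofFn_prod :
    ∀ (m : ℕ) (a : Fin m → A), (∀ i j, i ≠ j → a i * a j = -(a j * a i)) →
      (List.ofFn a).reverse.prod = ((-1:ℝ)^(m*(m-1)/2)) • (List.ofFn a).prod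
  | 0, a, _ => by simp
  | (m+1), a, h => by
    have htail := reverse_ofFn_prod m (fun i => a i.succ)
      (fun i j hij => h _ _ (fun e => hij (Fin.succ_injective _ e)))
    have hc : ∀ c ∈ List.ofFn (fun i : Fin m => a i.succ), c * a 0 = -(a 0 * c) := by
      intro c hcm
      rw [List.mem_ofFn] at hcm
      obtain ⟨i, rfl⟩ := hcm
      exact h i.succ 0 (Fin.succ_ne_zero i)
    rw [List.ofFn_succ, List.reverse_cons, List.prod_append, List.prod_cons, List.prod_nil,
      mul_one, htail, smul_mul_assoc, prod_mul_anticomm _ (a 0) hc, List.length_ofFn,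
      List.prod_cons, smul_smul, Nat.add_sub_cancel, ← pow_add]
    congr 1
    apply npow_eq
    have e3 : (m+1)*m/2 = m*(m-1)/2 + m := tri2 m
    generalize m*(m-1)/2 = u at e3 ⊢
    omega

end Gen


section Final

variable {W : Type*} [AddCommGroup W] [Module ℝ W]

lemma genQ_polar (v w : W × Module.Dual ℝ W) :
    QuadraticMap.polar (genQ W) v w = -(v.2 w.1) - w.2 v.1 := by
  unfold genQ
  rw [LinearMap.BilinMap.polar_toQuadraticMap]
  simp
  ring

lemma gen_anticomm (g : W →ₗ[ℝ] W →ₗ[ℝ] ℝ) {n : ℕ} (e : Basis (Fin n) ℝ W)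
    (honb : ∀ i j : Fin n, g (e i) (e j) = if i = j then 1 else 0)
    (i j : Fin n) (hij : i ≠ j) :
    CliffordAlgebra.ι (genQ W) ((e i, -(g (e i))) : W × Module.Dual ℝ W) *
        CliffordAlgebra.ι (genQ W) ((e j, -(g (e j))) : W × Module.Dual ℝ W)
      = -(CliffordAlgebra.ι (genQ W) ((e j, -(g (e j))) : W × Module.Dual ℝ W) *
          CliffordAlgebra.ι (genQ W) ((e i, -(g (e i))) : W × Module.Dual ℝ W)) := by
  have h := CliffordAlgebra.ι_mul_ι_add_swap (Q := genQ W)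
    ((e i, -(g (e i))) : W × Module.Dual ℝ W) ((e j, -(g (e j))) : W × Module.Dual ℝ W)
  have hp : QuadraticMap.polar (genQ W)
      ((e i, -(g (e i))) : W × Module.Dual ℝ W) ((e j, -(g (e j))) : W × Module.Dual ℝ W) = 0 := by
    rw [genQ_polar]
    simp only [LinearMap.neg_apply]
    rw [honb i j, honb j i, if_neg hij, if_neg (Ne.symm hij)]
    ring
  rw [hp, map_zero] at h
  exact eq_neg_of_add_eq_zero_left h

theorem genPairing_volume_adjoint' (n : ℕ) [FiniteDimensional ℝ W]
    (hn : Module.finrank ℝ W = n)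
    (g : W →ₗ[ℝ] W →ₗ[ℝ] ℝ)
    (e : Basis (Fin n) ℝ W)
    (honb : ∀ i j : Fin n, g (e i) (e j) = if i = j then 1 else 0)
    (κ : CliffordAlgebra (genQ W) →ₐ[ℝ] Module.End ℝ (ExteriorAlgebra ℝ (Module.Dual ℝ W)))
    (hκ : ∀ (w : W × Module.Dual ℝ W) (ρ : ExteriorAlgebra ℝ (Module.Dual ℝ W)),
      κ (CliffordAlgebra.ι (genQ W) w) ρ =
        ExteriorAlgebra.ι ℝ w.2 * ρ -
          CliffordAlgebra.contractLeft (Module.Dual.eval ℝ W w.1) ρ)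
    (ρ τ : ExteriorAlgebra ℝ (Module.Dual ℝ W)) :
    genPairing W n
        (κ ((List.ofFn fun i : Fin n =>
          CliffordAlgebra.ι (genQ W) ((e i, -(g (e i))) : W × Module.Dual ℝ W)).prod) ρ) τ =
      ((-1 : ℝ) ^ (n * (n + 1) / 2)) •
        genPairing W n ρ
          (κ ((List.ofFn fun i : Fin n =>
            CliffordAlgebra.ι (genQ W) ((e i, -(g (e i))) : W × Module.Dual ℝ W)).prod) τ) := by
  set l : List (W × Module.Dual ℝ W) :=
    List.ofFn (fun i : Fin n => ((e i, -(g (e i))) : W × Module.Dual ℝ W)) with hl_def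
  have hl : (List.ofFn fun i : Fin n =>
      CliffordAlgebra.ι (genQ W) ((e i, -(g (e i))) : W × Module.Dual ℝ W))
      = l.map (CliffordAlgebra.ι (genQ W)) := by
    rw [hl_def, List.map_ofFn]
    rfl
  rw [hl, list_adj n hn κ hκ l ρ τ]
  have hrev : (l.reverse.map (CliffordAlgebra.ι (genQ W))).prod
      = ((-1:ℝ)^(n*(n-1)/2)) • (l.map (CliffordAlgebra.ι (genQ W))).prod := by
    rw [List.map_reverse, hl_def, List.map_ofFn]
    exact reverse_ofFn_prod n _ (fun i j hij => gen_anticomm g e honb i j hij)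
  rw [hrev, map_smul, LinearMap.smul_apply, pairing_smul_right, smul_smul, ← pow_add]
  have hlen : l.length = n := by rw [hl_def, List.length_ofFn]
  rw [hlen]
  congr 1
  apply npow_eq
  have e3 : n*(n+1)/2 = n*(n-1)/2 + n := by
    rw [mul_comm n (n+1)]; exact tri2 n
  have e4 : n*n = n*(n-1) + n := by
    cases n with
    | zero => simp
    | succ k => simp only [Nat.add_sub_cancel]; ring
  have e5 : (n*(n-1)) % 2 = 0 := by
    cases n with
    | zero => simp
    | succ k =>
      simp only [Nat.add_sub_cancel]
      rw [Nat.mul_comm]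
      exact Nat.even_iff.mp (Nat.even_mul_succ_self k)
  generalize hA : n*(n-1) = A at e3 e4 e5 ⊢
  generalize hB : n*(n+1) = B at e3 ⊢
  generalize hD : n*n = D at e4 ⊢
  omega

end Final

end GenAux


/-- Let `𝒢̃ = κ(d₁⁻ ⋯ dₙ⁻)` be the spinor action of the Clifford volume
element of a generalised metric (with orthonormal basis `eᵢ` for `g` and
`dᵢ⁻ = eᵢ ⊕ (−g(eᵢ,·))`). Then `⟨𝒢̃ ρ, τ⟩ = (−1)^{n(n+1)/2} ⟨ρ, 𝒢̃ τ⟩` for all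
`ρ, τ ∈ Λ*W*`. -/
theorem genPairing_volume_adjoint (n : ℕ) (W : Type*) [AddCommGroup W] [Module ℝ W]
    [FiniteDimensional ℝ W] (hn : Module.finrank ℝ W = n)
    (g : W →ₗ[ℝ] W →ₗ[ℝ] ℝ) (hsymm : ∀ x y : W, g x y = g y x)
    (hpos : ∀ x : W, x ≠ 0 → 0 < g x x)
    (e : Basis (Fin n) ℝ W)
    (honb : ∀ i j : Fin n, g (e i) (e j) = if i = j then 1 else 0)
    (κ : CliffordAlgebra (genQ W) →ₐ[ℝ] Module.End ℝ (ExteriorAlgebra ℝ (Module.Dual ℝ W)))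
    (hκ : ∀ (w : W × Module.Dual ℝ W) (ρ : ExteriorAlgebra ℝ (Module.Dual ℝ W)),
      κ (CliffordAlgebra.ι (genQ W) w) ρ =
        ExteriorAlgebra.ι ℝ w.2 * ρ -
          CliffordAlgebra.contractLeft (Module.Dual.eval ℝ W w.1) ρ)
    (ρ τ : ExteriorAlgebra ℝ (Module.Dual ℝ W)) :
    genPairing W n
        (κ ((List.ofFn fun i : Fin n =>
          CliffordAlgebra.ι (genQ W) ((e i, -(g (e i))) : W × Module.Dual ℝ W)).prod) ρ) τ =
      ((-1 : ℝ) ^ (n * (n + 1) / 2)) •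
        genPairing W n ρ
          (κ ((List.ofFn fun i : Fin n =>
            CliffordAlgebra.ι (genQ W) ((e i, -(g (e i))) : W × Module.Dual ℝ W)).prod) τ) :=
  GenAux.genPairing_volume_adjoint' n hn g e honb κ hκ ρ τ
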